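/- arXiv:1203.5424 — 7 statements merged into one kernel-verified Lean document; each statement's English description precedes it below -/
import Mathlib

section
/- For every integer n > 1, the sum over i+j=n with i ≥ 1 of binomial(2i-1,i)*binomial(2j-1,j) equals 4^(n-1). -/
open Polynomial Finset

lemma smeval_desc_neg_half (k : ℕ) :
    Polynomial.smeval (descPochhammer ℤ k) (-(1/2) : ℚ) =
      (-1)^k * (2*k).factorial / (4^k * k.factorial) := by
  induction k with
  | zero => simp
  | succ k ih =>
    have h2 : ((2*(k+1)).factorial : ℚ) = (2*k+2)*((2*k+1)*(2*k).factorial) := by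
      have : 2*(k+1) = (2*k+1)+1 := by ring
      rw [this, Nat.factorial_succ, Nat.factorial_succ]; push_cast; ring
    rw [descPochhammer_succ_right, Polynomial.smeval_mul, ih, Polynomial.smeval_sub,
      Polynomial.smeval_X, Polynomial.smeval_natCast, h2, Nat.factorial_succ]
    have hf : ((k.factorial : ℚ)) ≠ 0 := Nat.cast_ne_zero.mpr k.factorial_ne_zero
    push_cast
    field_simp
    ring

lemma smeval_desc_neg_one (k : ℕ) :
    Polynomial.smeval (descPochhammer ℤ k) (-1 : ℚ) = (-1)^k * k.factorial := by
  induction k with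
  | zero => simp
  | succ k ih =>
    rw [descPochhammer_succ_right, Polynomial.smeval_mul, ih, Polynomial.smeval_sub,
      Polynomial.smeval_X, Polynomial.smeval_natCast, Nat.factorial_succ]
    push_cast
    ring

lemma ring_choose_neg_half (k : ℕ) :
    Ring.choose (-(1/2) : ℚ) k = (-1)^k * (2*k).choose k / 4^k := by
  have h := Ring.descPochhammer_eq_factorial_smul_choose (-(1/2) : ℚ) k
  rw [smeval_desc_neg_half] at h
  have hc : ((2*k).choose k : ℚ) * (k.factorial * k.factorial) = (2*k).factorial := by
    have h1 := Nat.choose_mul_factorial_mul_factorial (Nat.le_mul_of_pos_left k (by norm_num) : k ≤ 2*k)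
    have h2 : 2*k - k = k := by omega
    rw [h2] at h1
    have := congrArg (Nat.cast : ℕ → ℚ) h1
    push_cast at this
    linarith [this]
  have hf : ((k.factorial : ℚ)) ≠ 0 := Nat.cast_ne_zero.mpr k.factorial_ne_zero
  have h4 : ((4:ℚ)^k) ≠ 0 := by positivity
  rw [nsmul_eq_mul, div_eq_iff (by positivity : ((4:ℚ)^k * k.factorial) ≠ 0)] at h
  have h' : Ring.choose (-(1/2) : ℚ) k
      = (-1)^k * (2*k).factorial / ((k.factorial) * (4^k * k.factorial)) := by
    rw [eq_div_iff (by positivity)]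
    linear_combination -h
  rw [h', ← hc]
  field_simp

lemma ring_choose_neg_one (k : ℕ) : Ring.choose (-1 : ℚ) k = (-1)^k := by
  have h := Ring.descPochhammer_eq_factorial_smul_choose (-1 : ℚ) k
  rw [smeval_desc_neg_one, nsmul_eq_mul] at h
  have hf : ((k.factorial : ℚ)) ≠ 0 := Nat.cast_ne_zero.mpr k.factorial_ne_zero
  have hk : (k.factorial:ℚ) * Ring.choose (-1:ℚ) k = k.factorial * (-1)^k := by
    linear_combination -h
  exact mul_left_cancel₀ hf hk

lemma central_conv (n : ℕ) :
    ∑ ij ∈ Finset.HasAntidiagonal.antidiagonal n, (2*ij.1).choose ij.1 * (2*ij.2).choose ij.2 = 4^n := by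
  have h := Ring.add_choose_eq (r := (-(1/2) : ℚ)) (s := (-(1/2) : ℚ)) n (Commute.all _ _)
  have hsum : (-(1/2 : ℚ)) + (-(1/2)) = -1 := by norm_num
  rw [hsum, ring_choose_neg_one] at h
  have hrw : ∀ ij ∈ Finset.HasAntidiagonal.antidiagonal n,
      Ring.choose (-(1/2) : ℚ) ij.1 * Ring.choose (-(1/2) : ℚ) ij.2
        = (-1)^n / 4^n * ((2*ij.1).choose ij.1 * (2*ij.2).choose ij.2) := by
    intro ij hij
    rw [ring_choose_neg_half, ring_choose_neg_half]
    have : ij.1 + ij.2 = n := Finset.HasAntidiagonal.mem_antidiagonal.mp hij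
    rw [← this]
    field_simp
    ring
  rw [Finset.sum_congr rfl hrw, ← Finset.mul_sum] at h
  have h4 : ((4:ℚ)^n) ≠ 0 := by positivity
  have hm : ((-1:ℚ))^n ≠ 0 := by
    simp [pow_ne_zero]
  rw [div_mul_eq_mul_div, eq_div_iff h4] at h
  have hS := (mul_left_cancel₀ hm h.symm)
  exact_mod_cast hS

lemma double_choose (i : ℕ) (hi : 1 ≤ i) : 2 * Nat.choose (2*i - 1) i = (2*i).choose i := by
  obtain ⟨k, rfl⟩ : ∃ k, i = k + 1 := ⟨i - 1, by omega⟩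
  have h1 : 2*(k+1) - 1 = 2*k+1 := by omega
  have h2 : 2*(k+1) = (2*k+1)+1 := by omega
  have hp : ((2*k+1)+1).choose (k+1) = (2*k+1).choose k + (2*k+1).choose (k+1) :=
    Nat.choose_succ_succ _ _
  rw [h1, h2]
  have h3 : (2*k+1).choose ((2*k+1) - (k+1)) = (2*k+1).choose (k+1) :=
    Nat.choose_symm (by omega)
  have h4 : (2*k+1) - (k+1) = k := by omega
  rw [h4] at h3
  omega

theorem sum_shifted_binom_eq_four_pow (n : ℕ) (hn : 1 < n) :
    ∑ i ∈ Finset.Icc 1 n, Nat.choose (2 * i - 1) i * Nat.choose (2 * (n - i) - 1) (n - i)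
      = 4 ^ (n - 1) := by
  have h0 : 0 < n := by omega
  have hconv := central_conv n
  rw [Finset.Nat.sum_antidiagonal_eq_sum_range_succ_mk, Finset.sum_range_succ,
    Finset.range_eq_Ico, Finset.sum_eq_sum_Ico_succ_bot h0] at hconv
  simp only [Nat.mul_zero, Nat.sub_zero, Nat.choose_zero_right, Nat.sub_self,
    Nat.choose_self, one_mul, mul_one, zero_add] at hconv
  -- hconv : (2*n).choose n + ∑ Ico 1 n + (2*n).choose n = 4^n  (roughly)
  have hsplit : (∑ i ∈ Finset.Icc 1 n,
        Nat.choose (2 * i - 1) i * Nat.choose (2 * (n - i) - 1) (n - i))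
      = (∑ i ∈ Finset.Ico 1 n,
        Nat.choose (2 * i - 1) i * Nat.choose (2 * (n - i) - 1) (n - i))
        + Nat.choose (2 * n - 1) n := by
    rw [← Finset.Ico_add_one_right_eq_Icc, Finset.sum_Ico_succ_top (by omega)]
    simp
  have hterm : ∀ k ∈ Finset.Ico 1 n,
      4 * (Nat.choose (2 * k - 1) k * Nat.choose (2 * (n - k) - 1) (n - k))
        = (2*k).choose k * (2*(n-k)).choose (n-k) := by
    intro k hk
    rw [Finset.mem_Ico] at hk
    rw [← double_choose k (by omega), ← double_choose (n-k) (by omega)]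
    ring
  have h4T : 4 * (∑ i ∈ Finset.Icc 1 n,
      Nat.choose (2 * i - 1) i * Nat.choose (2 * (n - i) - 1) (n - i)) = 4^n := by
    rw [hsplit, Nat.mul_add, Finset.mul_sum, Finset.sum_congr rfl hterm]
    have hd := double_choose n (by omega)
    omega
  have hp : 4^n = 4 * 4^(n-1) := by
    conv_lhs => rw [show n = (n-1)+1 by omega]
    rw [pow_succ]
    ring
  omega
end

section
/- For all nonnegative integers n and all integers ℓ with ℓ > 2n, the sum over i+j=n of binomial(2i-ℓ,i)*binomial(2j+ℓ,j) equals 4^n. -/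
/-- Generalized binomial coefficient with real upper argument. -/
noncomputable def rchoose (x : ℝ) (k : ℕ) : ℝ :=
  (∏ j ∈ Finset.range k, (x - j)) / (Nat.factorial k : ℝ)

open Finset

lemma rchoose_zero (x : ℝ) : rchoose x 0 = 1 := by simp [rchoose]

lemma factorial_cast_ne (k : ℕ) : ((Nat.factorial k : ℕ) : ℝ) ≠ 0 := by
  exact_mod_cast Nat.factorial_ne_zero k

lemma rchoose_succ (x : ℝ) (k : ℕ) :
    rchoose x (k + 1) = rchoose x k * (x - k) / (k + 1) := by
  have hf : (Nat.factorial k : ℝ) ≠ 0 := factorial_cast_ne k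
  have hk : ((k : ℝ) + 1) ≠ 0 := by positivity
  simp only [rchoose, Finset.prod_range_succ, Nat.factorial_succ]
  push_cast
  rw [div_mul_eq_mul_div, div_div, mul_comm ((Nat.factorial k : ℝ))]

lemma rchoose_pascal (x : ℝ) (k : ℕ) :
    rchoose (x + 1) (k + 1) = rchoose x (k + 1) + rchoose x k := by
  have h1 : ∏ j ∈ Finset.range (k + 1), (x + 1 - (j : ℝ))
      = (x + 1) * ∏ j ∈ Finset.range k, (x - (j : ℝ)) := by
    rw [Finset.prod_range_succ']
    have h2 : ∀ j ∈ Finset.range k, (x + 1 - ((j + 1 : ℕ) : ℝ)) = x - j := by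
      intro j _; push_cast; ring
    rw [Finset.prod_congr rfl h2]
    push_cast; ring
  have hk1 : ((k : ℝ) + 1) ≠ 0 := by positivity
  simp only [rchoose, h1, Nat.factorial_succ, Finset.prod_range_succ]
  push_cast
  field_simp [factorial_cast_ne k]
  ring

lemma smeval_descPochhammer_real (k : ℕ) (x : ℝ) :
    Polynomial.smeval (descPochhammer ℤ k) x = ∏ j ∈ Finset.range k, (x - j) := by
  induction k with
  | zero => simp [descPochhammer_zero, Polynomial.smeval_one]
  | succ n ih =>
      rw [descPochhammer_succ_right, Polynomial.smeval_mul, ih, Finset.prod_range_succ,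
        Polynomial.smeval_sub, Polynomial.smeval_X, Polynomial.smeval_natCast]
      simp

/-- Chu–Vandermonde for `rchoose`. -/
lemma rchoose_add (x y : ℝ) (k : ℕ) :
    rchoose (x + y) k = ∑ i ∈ Finset.range (k + 1), rchoose x i * rchoose y (k - i) := by
  have h := Ring.descPochhammer_smeval_add (R := ℝ) (r := x) (s := y) k (Commute.all x y)
  rw [Finset.Nat.sum_antidiagonal_eq_sum_range_succ_mk] at h
  simp only [smeval_descPochhammer_real] at h
  have : rchoose (x + y) k
      = (∑ i ∈ Finset.range (k + 1), (Nat.choose k i : ℝ) *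
          ((∏ j ∈ Finset.range i, (x - j)) * (∏ j ∈ Finset.range (k - i), (y - j))))
        / (Nat.factorial k : ℝ) := by
    rw [rchoose, h]
  rw [this, Finset.sum_div]
  refine Finset.sum_congr rfl ?_
  intro i hi
  have hik : i ≤ k := Nat.lt_succ_iff.mp (Finset.mem_range.mp hi)
  have hfact : (Nat.choose k i : ℝ) * (Nat.factorial i : ℝ) * (Nat.factorial (k - i) : ℝ)
      = (Nat.factorial k : ℝ) := by
    exact_mod_cast congrArg (Nat.cast (R := ℝ)) (Nat.choose_mul_factorial_mul_factorial hik)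
  rw [rchoose, rchoose]
  field_simp [factorial_cast_ne]
  rw [← hfact]
  ring

/-- The convolution sum with shifted upper arguments. -/
noncomputable def Wsum (m : ℕ) (a b : ℝ) : ℝ :=
  ∑ i ∈ Finset.range (m + 1),
    rchoose (2 * (i : ℝ) + a) i * rchoose (2 * ((m - i : ℕ) : ℝ) + b) (m - i)

lemma Wsum_symm (m : ℕ) (a b : ℝ) : Wsum m a b = Wsum m b a := by
  unfold Wsum
  rw [← Finset.sum_range_reflect]
  refine Finset.sum_congr rfl ?_
  intro i hi
  have him : i ≤ m := Nat.lt_succ_iff.mp (Finset.mem_range.mp hi)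
  have h1 : m + 1 - 1 - i = m - i := by omega
  have h2 : m - (m - i) = i := by omega
  rw [h1, h2, mul_comm]

lemma Wsum_split (m : ℕ) (a b : ℝ) :
    Wsum (m + 1) (a + 1) b = Wsum (m + 1) a b + Wsum m (a + 2) b := by
  unfold Wsum
  rw [Finset.sum_range_succ', Finset.sum_range_succ'
    (fun i => rchoose (2 * (i : ℝ) + a) i * rchoose (2 * (((m+1) - i : ℕ) : ℝ) + b) ((m+1) - i))]
  have hterm : ∀ i : ℕ,
      rchoose (2 * ((i + 1 : ℕ) : ℝ) + (a + 1)) (i + 1)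
        * rchoose (2 * (((m + 1) - (i + 1) : ℕ) : ℝ) + b) ((m + 1) - (i + 1))
      = rchoose (2 * ((i + 1 : ℕ) : ℝ) + a) (i + 1)
          * rchoose (2 * (((m + 1) - (i + 1) : ℕ) : ℝ) + b) ((m + 1) - (i + 1))
        + rchoose (2 * ((i : ℕ) : ℝ) + (a + 2)) i
          * rchoose (2 * ((m - i : ℕ) : ℝ) + b) (m - i) := by
    intro i
    have hx : 2 * ((i + 1 : ℕ) : ℝ) + (a + 1) = (2 * ((i + 1 : ℕ) : ℝ) + a) + 1 := by ring
    have hx2 : 2 * ((i + 1 : ℕ) : ℝ) + a = 2 * ((i : ℕ) : ℝ) + (a + 2) := by push_cast; ring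
    have hs : (m + 1) - (i + 1) = m - i := by omega
    rw [hx, rchoose_pascal, add_mul, hx2, hs]
  rw [Finset.sum_congr rfl (fun i _ => hterm i), Finset.sum_add_distrib]
  have h0 : rchoose (2 * ((0 : ℕ) : ℝ) + (a + 1)) 0 = rchoose (2 * ((0 : ℕ) : ℝ) + a) 0 := by
    rw [rchoose_zero, rchoose_zero]
  rw [h0]
  ring

lemma Wsum_shift (m : ℕ) : ∀ a b : ℝ, Wsum m (a + 1) b = Wsum m a (b + 1) := by
  induction m with
  | zero =>
      intro a b
      simp [Wsum, rchoose_zero]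
  | succ n ih =>
      intro a b
      have h1 : Wsum (n + 1) (a + 1) b = Wsum (n + 1) a b + Wsum n (a + 2) b := Wsum_split n a b
      have h2 : Wsum (n + 1) a (b + 1) = Wsum (n + 1) a b + Wsum n a (b + 2) := by
        rw [Wsum_symm (n + 1) a (b + 1), Wsum_split n b a, Wsum_symm (n + 1) b a,
          Wsum_symm n (b + 2) a]
      have h3 : Wsum n (a + 2) b = Wsum n a (b + 2) := by
        have i1 := ih (a + 1) b
        have i2 := ih a (b + 1)
        have e1 : a + 1 + 1 = a + 2 := by ring
        have e2 : b + 1 + 1 = b + 2 := by ring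
        rw [e1] at i1
        rw [e2] at i2
        rw [i1, i2]
      rw [h1, h2, h3]

lemma Wsum_shift_nat (m : ℕ) (k : ℕ) (a b : ℝ) : Wsum m (a + k) b = Wsum m a (b + k) := by
  induction k generalizing a b with
  | zero => simp
  | succ j ih =>
      have e1 : a + ((j + 1 : ℕ) : ℝ) = (a + j) + 1 := by push_cast; ring
      have e2 : b + ((j + 1 : ℕ) : ℝ) = (b + 1) + j := by push_cast; ring
      rw [e1, Wsum_shift m (a + j) b, e2, ← ih a (b + 1)]

lemma rchoose_natCast (m k : ℕ) (hk : k ≤ m) :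
    rchoose (m : ℝ) k = (Nat.choose m k : ℝ) := by
  have hprod : ∏ j ∈ Finset.range k, ((m : ℝ) - j) = (Nat.descFactorial m k : ℝ) := by
    rw [Nat.descFactorial_eq_prod_range, Nat.cast_prod]
    refine Finset.prod_congr rfl ?_
    intro j hj
    have : j ≤ m := le_trans (le_of_lt (Finset.mem_range.mp hj)) hk
    rw [Nat.cast_sub this]
  rw [rchoose, hprod, Nat.descFactorial_eq_factorial_mul_choose, Nat.cast_mul]
  field_simp [factorial_cast_ne]

lemma rchoose_two_mul (i : ℕ) : rchoose (2 * (i : ℝ)) i = (Nat.centralBinom i : ℝ) := by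
  have h : (2 * (i : ℝ)) = ((2 * i : ℕ) : ℝ) := by push_cast; ring
  rw [h, rchoose_natCast (2 * i) i (by omega), Nat.centralBinom_eq_two_mul_choose]

lemma rchoose_neg_half (i : ℕ) :
    rchoose (-(1/2) : ℝ) i = (-1) ^ i * (Nat.centralBinom i : ℝ) / 4 ^ i := by
  induction i with
  | zero => simp [rchoose_zero]
  | succ n ih =>
      have hrec : ((n : ℝ) + 1) * (Nat.centralBinom (n + 1) : ℝ)
          = 2 * (2 * n + 1) * (Nat.centralBinom n : ℝ) := by
        exact_mod_cast congrArg (Nat.cast (R := ℝ)) (Nat.succ_mul_centralBinom_succ n)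
      have h1 : ((n : ℝ) + 1) ≠ 0 := by positivity
      have hcb : (Nat.centralBinom (n + 1) : ℝ)
          = 2 * (2 * (n : ℝ) + 1) * (Nat.centralBinom n : ℝ) / ((n : ℝ) + 1) := by
        field_simp
        linarith [hrec]
      rw [rchoose_succ, ih, hcb, pow_succ, pow_succ]
      have h4 : (4 : ℝ) ^ n ≠ 0 := by positivity
      field_simp
      ring

lemma rchoose_neg_one (n : ℕ) : rchoose (-1 : ℝ) n = (-1) ^ n := by
  induction n with
  | zero => simp [rchoose_zero]
  | succ k ih =>
      rw [rchoose_succ, ih]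
      have h1 : ((k : ℝ) + 1) ≠ 0 := by positivity
      field_simp
      ring

lemma cb_eq_neg_four_pow (i : ℕ) :
    (Nat.centralBinom i : ℝ) = (-4) ^ i * rchoose (-(1/2) : ℝ) i := by
  have hsq : ((-1 : ℝ)) ^ i * (-1) ^ i = 1 := by
    rw [← pow_add, ← two_mul, pow_mul]
    norm_num
  have h4 : (4 : ℝ) ^ i ≠ 0 := by positivity
  rw [rchoose_neg_half, neg_pow, div_eq_mul_inv]
  have hre : (-1 : ℝ) ^ i * 4 ^ i * ((-1 : ℝ) ^ i * (Nat.centralBinom i : ℝ) * ((4 : ℝ) ^ i)⁻¹)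
      = ((-1 : ℝ) ^ i * (-1 : ℝ) ^ i) * ((4 : ℝ) ^ i * ((4 : ℝ) ^ i)⁻¹)
        * (Nat.centralBinom i : ℝ) := by ring
  rw [hre, hsq, mul_inv_cancel₀ h4, one_mul, one_mul]

lemma Wsum_zero_zero (n : ℕ) : Wsum n 0 0 = 4 ^ n := by
  have hterm : ∀ i ∈ Finset.range (n + 1),
      rchoose (2 * (i : ℝ) + 0) i * rchoose (2 * ((n - i : ℕ) : ℝ) + 0) (n - i)
      = (-4 : ℝ) ^ n * (rchoose (-(1/2) : ℝ) i * rchoose (-(1/2) : ℝ) (n - i)) := by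
    intro i hi
    have hin : i ≤ n := Nat.lt_succ_iff.mp (Finset.mem_range.mp hi)
    have hpow : (-4 : ℝ) ^ n = (-4 : ℝ) ^ i * (-4 : ℝ) ^ (n - i) := by
      rw [← pow_add]
      congr 1
      omega
    rw [add_zero, add_zero, rchoose_two_mul, rchoose_two_mul, cb_eq_neg_four_pow,
      cb_eq_neg_four_pow, hpow]
    ring
  unfold Wsum
  rw [Finset.sum_congr rfl hterm, ← Finset.mul_sum]
  have hv : ∑ i ∈ Finset.range (n + 1), rchoose (-(1/2) : ℝ) i * rchoose (-(1/2) : ℝ) (n - i)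
      = rchoose (-1 : ℝ) n := by
    rw [← rchoose_add]
    norm_num
  rw [hv, rchoose_neg_one, ← mul_pow]
  norm_num

theorem sum_gen_binom_eq_four_pow_of_int (n : ℕ) (ℓ : ℤ) (hℓ : (2 * n : ℤ) < ℓ) :
    ∑ i ∈ Finset.range (n + 1),
      rchoose (2 * (i : ℝ) - (ℓ : ℝ)) i * rchoose (2 * ((n - i : ℕ) : ℝ) + (ℓ : ℝ)) (n - i)
      = 4 ^ n := by
  have hℓ0 : (0 : ℤ) ≤ ℓ := le_of_lt (lt_of_le_of_lt (by positivity) hℓ)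
  have hcast : ((ℓ.toNat : ℕ) : ℝ) = (ℓ : ℝ) := by
    exact_mod_cast congrArg (fun z : ℤ => (z : ℝ)) (Int.toNat_of_nonneg hℓ0)
  have hmain : ∑ i ∈ Finset.range (n + 1),
      rchoose (2 * (i : ℝ) - (ℓ : ℝ)) i * rchoose (2 * ((n - i : ℕ) : ℝ) + (ℓ : ℝ)) (n - i)
      = Wsum n (-((ℓ.toNat : ℕ) : ℝ)) ((ℓ.toNat : ℕ) : ℝ) := by
    unfold Wsum
    refine Finset.sum_congr rfl ?_
    intro i _
    rw [hcast, sub_eq_add_neg]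
  rw [hmain]
  have h1 : Wsum n (-((ℓ.toNat : ℕ) : ℝ) + ((ℓ.toNat : ℕ) : ℝ)) 0
      = Wsum n (-((ℓ.toNat : ℕ) : ℝ)) (0 + ((ℓ.toNat : ℕ) : ℝ)) := Wsum_shift_nat n ℓ.toNat _ 0
  rw [neg_add_cancel, zero_add] at h1
  rw [← h1]
  exact Wsum_zero_zero n
end

section
/- For all positive integers t and nonnegative integers n, S_{t+2}(n+1) = S_t(n+1) + 4*S_{t+2}(n), where S_t(n) is the sum over all t-tuples (i_1,...,i_t) of nonnegative integers with i_1+...+i_t = n of the product binomial(2i_1,i_1)*...*binomial(2i_t,i_t). -/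
/-- `S t n` is the sum over `t`-tuples of nonnegative integers summing to `n`
of products of central binomial coefficients. -/
def S (t n : ℕ) : ℕ :=
  ∑ f ∈ Finset.Nat.antidiagonalTuple t n, ∏ m : Fin t, Nat.centralBinom (f m)

/-- The WZ-style certificate identity for the central binomial convolution. -/
lemma S_keyQ (k m : ℕ) :
    ((k:ℚ)+m+2) * ((Nat.centralBinom k : ℚ) * Nat.centralBinom (m+2))
      - 4*((k:ℚ)+m+2) * ((Nat.centralBinom k : ℚ) * Nat.centralBinom (m+1))
    = 2*k*(2*(m:ℚ)+3)*(Nat.centralBinom k : ℚ)*(catalan (m+1) : ℚ)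
      - 2*((k:ℚ)+1)*(2*(m:ℚ)+1)*(Nat.centralBinom (k+1) : ℚ)*(catalan m : ℚ) := by
  have h1 := congrArg (Nat.cast (R := ℚ)) (Nat.succ_mul_centralBinom_succ (m+1))
  have h2 := congrArg (Nat.cast (R := ℚ)) (Nat.succ_mul_centralBinom_succ k)
  have h3 := congrArg (Nat.cast (R := ℚ)) (succ_mul_catalan_eq_centralBinom (m+1))
  have h4 := congrArg (Nat.cast (R := ℚ)) (succ_mul_catalan_eq_centralBinom m)
  have h0 := congrArg (Nat.cast (R := ℚ)) (Nat.succ_mul_centralBinom_succ m)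
  push_cast at h1 h2 h3 h4 h0
  have hm1 : ((m:ℚ)+1) ≠ 0 := by positivity
  have h5 : (Nat.centralBinom (m+1) : ℚ) = 2*(2*(m:ℚ)+1)*(catalan m : ℚ) := by
    apply mul_left_cancel₀ hm1
    rw [h0, ← h4]; ring
  have hm2 : ((m:ℚ)+2) ≠ 0 := by positivity
  apply mul_left_cancel₀ hm2
  linear_combination (((k:ℚ)+m+2)*(Nat.centralBinom k : ℚ)) * h1
    + (((m:ℚ)+2)*2*(2*(m:ℚ)+1)*(catalan m : ℚ)) * h2
    - (2*(k:ℚ)*(2*(m:ℚ)+3)*(Nat.centralBinom k : ℚ)) * h3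
    - (((m:ℚ)+2)*2*(2*(k:ℚ)+1)*(Nat.centralBinom k : ℚ)) * h5

/-- The convolution of central binomial coefficients quadruples at each step. -/
lemma S_conv2 (n : ℕ) :
    ∑ k ∈ Finset.range (n+2), Nat.centralBinom k * Nat.centralBinom (n+1-k)
      = 4 * ∑ k ∈ Finset.range (n+1), Nat.centralBinom k * Nat.centralBinom (n-k) := by
  have hn1 : ((n:ℚ)+1) ≠ 0 := by positivity
  set h : ℕ → ℚ := fun k =>
    2*k*(2*(n:ℚ)+1-2*k)*(Nat.centralBinom k : ℚ)*(catalan (n-k) : ℚ) with hh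
  have hterm : ∀ k ∈ Finset.range n,
      ((n:ℚ)+1) * ((Nat.centralBinom k : ℚ) * (Nat.centralBinom (n+1-k) : ℚ))
        - 4*((n:ℚ)+1) * ((Nat.centralBinom k : ℚ) * (Nat.centralBinom (n-k) : ℚ))
      = h k - h (k+1) := by
    intro k hk
    rw [Finset.mem_range] at hk
    obtain ⟨m, rfl⟩ : ∃ m, n = k + m + 1 := ⟨n - k - 1, by omega⟩
    have e1 : k + m + 1 + 1 - k = m + 2 := by omega
    have e2 : k + m + 1 - k = m + 1 := by omega
    have e3 : k + m + 1 - (k + 1) = m := by omega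
    rw [e1]
    simp only [hh]
    rw [e2, e3]
    have := S_keyQ k m
    push_cast
    push_cast at this
    linear_combination this
  have tele : ∑ k ∈ Finset.range n,
      (((n:ℚ)+1) * ((Nat.centralBinom k : ℚ) * (Nat.centralBinom (n+1-k) : ℚ))
        - 4*((n:ℚ)+1) * ((Nat.centralBinom k : ℚ) * (Nat.centralBinom (n-k) : ℚ)))
      = h 0 - h n := by
    rw [Finset.sum_congr rfl hterm]
    exact Finset.sum_range_sub' h n
  have tele' : ((n:ℚ)+1) * (∑ k ∈ Finset.range n, (Nat.centralBinom k : ℚ) * (Nat.centralBinom (n+1-k) : ℚ))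
      - 4*((n:ℚ)+1) * (∑ k ∈ Finset.range n, (Nat.centralBinom k : ℚ) * (Nat.centralBinom (n-k) : ℚ))
      = h 0 - h n := by
    rw [← tele, Finset.mul_sum, Finset.mul_sum, ← Finset.sum_sub_distrib]
  have h0 : h 0 = 0 := by simp [hh]
  have hnv : h n = 2*(n:ℚ)*(Nat.centralBinom n : ℚ) := by
    simp only [hh, Nat.sub_self, catalan_zero]
    push_cast
    ring
  have hsucc := congrArg (Nat.cast (R := ℚ)) (Nat.succ_mul_centralBinom_succ n)
  push_cast at hsucc
  have main : ((n:ℚ)+1) * (∑ k ∈ Finset.range (n+2), (Nat.centralBinom k : ℚ) * (Nat.centralBinom (n+1-k) : ℚ))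
      = ((n:ℚ)+1) * (4 * ∑ k ∈ Finset.range (n+1), (Nat.centralBinom k : ℚ) * (Nat.centralBinom (n-k) : ℚ)) := by
    rw [Finset.sum_range_succ, Finset.sum_range_succ,
      Finset.sum_range_succ (fun k => (Nat.centralBinom k : ℚ) * (Nat.centralBinom (n-k) : ℚ))]
    have e4 : n + 1 - n = 1 := by omega
    have e5 : n + 1 - (n+1) = 0 := by omega
    have e6 : n - n = 0 := by omega
    rw [e4, e5, e6]
    have c0 : (Nat.centralBinom 0 : ℚ) = 1 := by norm_num [Nat.centralBinom]
    have c1 : (Nat.centralBinom 1 : ℚ) = 2 := by norm_num [Nat.centralBinom]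
    rw [c0, c1]
    rw [h0, hnv] at tele'
    linear_combination tele' + hsucc
  have mainc := mul_left_cancel₀ hn1 main
  exact_mod_cast mainc

/-- Central binomial convolution over the antidiagonal gives `4 ^ m`. -/
lemma S_cb4 (m : ℕ) :
    ∑ q ∈ Finset.HasAntidiagonal.antidiagonal m, Nat.centralBinom q.1 * Nat.centralBinom q.2 = 4 ^ m := by
  induction m with
  | zero => simp [Nat.centralBinom]
  | succ m ih =>
    rw [Finset.Nat.sum_antidiagonal_eq_sum_range_succ
      (fun a b => Nat.centralBinom a * Nat.centralBinom b)]
    rw [Finset.Nat.sum_antidiagonal_eq_sum_range_succ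
      (fun a b => Nat.centralBinom a * Nat.centralBinom b)] at ih
    have := S_conv2 m
    simp only [Nat.succ_eq_add_one] at this ih ⊢
    rw [show m + 1 + 1 = m + 2 from rfl] at *
    rw [this, ih, pow_succ]
    ring

lemma S_succ_eq (t n : ℕ) :
    S (t+1) n = ∑ p ∈ Finset.HasAntidiagonal.antidiagonal n, Nat.centralBinom p.1 * S t p.2 := by
  simp only [S, Finset.mul_sum]
  rw [Finset.sum_sigma']
  refine Finset.sum_nbij' (fun f => ⟨(f 0, ∑ i : Fin t, f i.succ), Fin.tail f⟩)
    (fun x => Fin.cons x.1.1 x.2) ?_ ?_ ?_ ?_ ?_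
  · intro f hf
    simp only [Finset.Nat.mem_antidiagonalTuple] at hf
    simp only [Finset.mem_sigma, Finset.HasAntidiagonal.mem_antidiagonal, Finset.Nat.mem_antidiagonalTuple]
    refine ⟨?_, rfl⟩
    rw [← hf, Fin.sum_univ_succ]
  · rintro ⟨⟨a, b⟩, g⟩ hx
    simp only [Finset.mem_sigma, Finset.HasAntidiagonal.mem_antidiagonal,
      Finset.Nat.mem_antidiagonalTuple] at hx ⊢
    rw [Fin.sum_univ_succ]
    simp [hx.1, hx.2]
  · intro f hf
    exact Fin.cons_self_tail f
  · rintro ⟨⟨a, b⟩, g⟩ hx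
    simp only [Finset.mem_sigma, Finset.HasAntidiagonal.mem_antidiagonal,
      Finset.Nat.mem_antidiagonalTuple] at hx
    simp only [Fin.cons_zero, Fin.tail_cons]
    congr 1
    simp [hx.2]
  · intro f hf
    rw [Fin.prod_univ_succ]
    rfl

lemma S_antidiag_assoc {M : Type*} [AddCommMonoid M] (n : ℕ) (f : ℕ → ℕ → ℕ → M) :
    ∑ p ∈ Finset.HasAntidiagonal.antidiagonal n, ∑ q ∈ Finset.HasAntidiagonal.antidiagonal p.2, f p.1 q.1 q.2
      = ∑ p ∈ Finset.HasAntidiagonal.antidiagonal n, ∑ q ∈ Finset.HasAntidiagonal.antidiagonal p.1, f q.1 q.2 p.2 := by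
  rw [Finset.sum_sigma', Finset.sum_sigma']
  refine Finset.sum_nbij' (fun x => ⟨(x.1.1 + x.2.1, x.2.2), (x.1.1, x.2.1)⟩)
    (fun x => ⟨(x.2.1, x.2.2 + x.1.2), (x.2.2, x.1.2)⟩) ?_ ?_ ?_ ?_ ?_
  · rintro ⟨⟨a, s⟩, ⟨b, c⟩⟩ hx
    simp only [Finset.mem_sigma, Finset.HasAntidiagonal.mem_antidiagonal] at hx ⊢
    exact ⟨by omega, trivial⟩
  · rintro ⟨⟨s, c⟩, ⟨a, b⟩⟩ hx
    simp only [Finset.mem_sigma, Finset.HasAntidiagonal.mem_antidiagonal] at hx ⊢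
    exact ⟨by omega, trivial⟩
  · rintro ⟨⟨a, s⟩, ⟨b, c⟩⟩ hx
    simp only [Finset.mem_sigma, Finset.HasAntidiagonal.mem_antidiagonal] at hx
    simp only [Sigma.mk.inj_iff, Prod.mk.injEq, heq_eq_eq]
    exact ⟨⟨trivial, hx.2⟩, trivial⟩
  · rintro ⟨⟨s, c⟩, ⟨a, b⟩⟩ hx
    simp only [Finset.mem_sigma, Finset.HasAntidiagonal.mem_antidiagonal] at hx
    simp only [Sigma.mk.inj_iff, Prod.mk.injEq, heq_eq_eq]
    exact ⟨⟨hx.2, trivial⟩, trivial⟩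
  · rintro ⟨⟨a, s⟩, ⟨b, c⟩⟩ hx
    rfl

/-- `S (t+2)` is the convolution of `S t` with powers of `4`. -/
lemma S_add_two (t n : ℕ) :
    S (t+2) n = ∑ p ∈ Finset.HasAntidiagonal.antidiagonal n, 4 ^ p.1 * S t p.2 := by
  calc S (t+2) n = ∑ p ∈ Finset.HasAntidiagonal.antidiagonal n, Nat.centralBinom p.1 * S (t+1) p.2 :=
        S_succ_eq (t+1) n
    _ = ∑ p ∈ Finset.HasAntidiagonal.antidiagonal n, ∑ q ∈ Finset.HasAntidiagonal.antidiagonal p.2,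
          Nat.centralBinom p.1 * (Nat.centralBinom q.1 * S t q.2) := by
        refine Finset.sum_congr rfl fun p _ => ?_
        rw [S_succ_eq, Finset.mul_sum]
    _ = ∑ p ∈ Finset.HasAntidiagonal.antidiagonal n, ∑ q ∈ Finset.HasAntidiagonal.antidiagonal p.1,
          Nat.centralBinom q.1 * (Nat.centralBinom q.2 * S t p.2) :=
        S_antidiag_assoc n (fun a b c => Nat.centralBinom a * (Nat.centralBinom b * S t c))
    _ = ∑ p ∈ Finset.HasAntidiagonal.antidiagonal n, 4 ^ p.1 * S t p.2 := by
        refine Finset.sum_congr rfl fun p _ => ?_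
        rw [← S_cb4 p.1, Finset.sum_mul]
        refine Finset.sum_congr rfl fun q _ => ?_
        ring

theorem S_recurrence (t : ℕ) (ht : 0 < t) (n : ℕ) :
    S (t + 2) (n + 1) = S t (n + 1) + 4 * S (t + 2) n := by
  rw [S_add_two, S_add_two,
    Finset.Nat.sum_antidiagonal_succ (f := fun p => 4 ^ p.1 * S t p.2)]
  simp only [pow_zero, one_mul, Finset.mul_sum]
  congr 1
  refine Finset.sum_congr rfl fun p _ => ?_
  rw [pow_succ]
  ring
end

section
/- For every nonnegative integer n and positive integer ℓ, the sum over all (2ℓ+1)-tuples of nonnegative integers summing to n of the product of central binomial coefficients equals binomial(2n+2ℓ, n+ℓ) * binomial(n+ℓ, n) / binomial(2ℓ, ℓ). -/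
open Finset Finset.Nat

/-- The recurrence satisfied by coefficients of `(1-4x)^{-s}`. -/
def HG (s : ℝ) (f : ℕ → ℝ) : Prop :=
  ∀ n : ℕ, ((n : ℝ) + 1) * f (n + 1) = 4 * ((n : ℝ) + s) * f n

lemma HG_congr {s t : ℝ} {f : ℕ → ℝ} (h : HG s f) (hst : s = t) : HG t f := hst ▸ h

lemma HG_unique {s : ℝ} {f g : ℕ → ℝ} (hf : HG s f) (hg : HG s g) (h0 : f 0 = g 0) :
    ∀ n, f n = g n := by
  intro n
  induction n with
  | zero => exact h0
  | succ n ih =>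
    have h1 : ((n : ℝ) + 1) ≠ 0 := by positivity
    refine mul_left_cancel₀ h1 ?_
    rw [hf n, hg n, ih]

lemma HG_conv {s t : ℝ} {f g : ℕ → ℝ} (hf : HG s f) (hg : HG t g) :
    HG (s + t) (fun n => ∑ p ∈ antidiagonal n, f p.1 * g p.2) := by
  intro n
  simp only
  have h1 : ((n : ℝ) + 1) * ∑ p ∈ antidiagonal (n + 1), f p.1 * g p.2
      = ∑ p ∈ antidiagonal (n + 1),
          ((p.1 : ℝ) * (f p.1 * g p.2) + (p.2 : ℝ) * (f p.1 * g p.2)) := by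
    rw [Finset.mul_sum]
    refine Finset.sum_congr rfl fun p hp => ?_
    have hpn : p.1 + p.2 = n + 1 := mem_antidiagonal.mp hp
    have hpr : (p.1 : ℝ) + (p.2 : ℝ) = (n : ℝ) + 1 := by exact_mod_cast congrArg (Nat.cast : ℕ → ℝ) hpn
    rw [← add_mul, hpr]
  rw [h1, Finset.sum_add_distrib,
    sum_antidiagonal_succ (f := fun p : ℕ × ℕ => (p.1 : ℝ) * (f p.1 * g p.2)),
    sum_antidiagonal_succ' (f := fun p : ℕ × ℕ => (p.2 : ℝ) * (f p.1 * g p.2))]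
  simp only [Nat.cast_zero, zero_mul, zero_add, Nat.cast_add, Nat.cast_one]
  rw [← Finset.sum_add_distrib, Finset.mul_sum]
  refine Finset.sum_congr rfl fun p hp => ?_
  have hpn : p.1 + p.2 = n := mem_antidiagonal.mp hp
  have hpr : (p.1 : ℝ) + (p.2 : ℝ) = (n : ℝ) := by exact_mod_cast congrArg (Nat.cast : ℕ → ℝ) hpn
  have e1 : ((p.1 : ℝ) + 1) * (f (p.1 + 1) * g p.2) = 4 * ((p.1 : ℝ) + s) * f p.1 * g p.2 := by
    rw [← mul_assoc, hf p.1]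
  have e2 : ((p.2 : ℝ) + 1) * (f p.1 * g (p.2 + 1)) = f p.1 * (4 * ((p.2 : ℝ) + t) * g p.2) := by
    rw [mul_left_comm, hg p.2]
  rw [e1, e2, ← hpr]
  ring

lemma HG_centralBinom : HG (1 / 2) (fun n => (Nat.centralBinom n : ℝ)) := by
  intro n
  have h' : ((n : ℝ) + 1) * (Nat.centralBinom (n + 1) : ℝ)
      = 2 * (2 * (n : ℝ) + 1) * (Nat.centralBinom n : ℝ) := by
    exact_mod_cast Nat.succ_mul_centralBinom_succ n
  rw [h']
  ring

/-- Decomposition of `antidiagonalTuple (k+1) n`. -/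
lemma antidiagonalTuple_succ_eq (k n : ℕ) :
    antidiagonalTuple (k + 1) n = (antidiagonal n).biUnion
      (fun p => (antidiagonalTuple k p.2).map
        ⟨Fin.cons p.1, Fin.cons_right_injective (α := fun _ => ℕ) p.1⟩) := by
  ext f
  simp only [mem_antidiagonalTuple, Finset.mem_biUnion, Finset.mem_map, HasAntidiagonal.mem_antidiagonal,
    Function.Embedding.coeFn_mk, Prod.exists]
  constructor
  · rintro rfl
    exact ⟨f 0, ∑ i : Fin k, f i.succ, (Fin.sum_univ_succ f).symm,
      Fin.tail f, rfl, Fin.cons_self_tail f⟩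
  · rintro ⟨a, b, hab, g, hg, rfl⟩
    rw [Fin.sum_cons, hg, hab]

lemma S_succ (k n : ℕ) :
    (∑ f ∈ antidiagonalTuple (k + 1) n, ∏ m, (Nat.centralBinom (f m) : ℝ))
    = ∑ p ∈ antidiagonal n, (Nat.centralBinom p.1 : ℝ) *
        ∑ g ∈ antidiagonalTuple k p.2, ∏ m, (Nat.centralBinom (g m) : ℝ) := by
  rw [antidiagonalTuple_succ_eq, Finset.sum_biUnion]
  · refine Finset.sum_congr rfl fun p hp => ?_
    rw [Finset.sum_map, Finset.mul_sum]
    refine Finset.sum_congr rfl fun g hg => ?_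
    simp only [Function.Embedding.coeFn_mk]
    rw [Fin.prod_univ_succ]
    simp
  · intro p hp q hq hpq
    simp only [Finset.disjoint_left, Finset.mem_map, Function.Embedding.coeFn_mk]
    rintro f ⟨g, hg, rfl⟩ ⟨g', hg', hf⟩
    apply hpq
    have h1 : q.1 = p.1 := by
      have := congrArg (fun h => h 0) hf
      simpa using this
    have hpn := mem_antidiagonal.mp hp
    have hqn := mem_antidiagonal.mp hq
    have h2 : p.2 = q.2 := by omega
    exact Prod.ext h1.symm h2

lemma S_zero_right (k : ℕ) :
    (∑ f ∈ antidiagonalTuple k 0, ∏ m, (Nat.centralBinom (f m) : ℝ)) = 1 := by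
  rw [antidiagonalTuple_zero_right, Finset.sum_singleton]
  simp [Nat.centralBinom_zero]

lemma HG_S : ∀ k : ℕ, HG (((k : ℝ) + 1) / 2)
    (fun n => ∑ f ∈ antidiagonalTuple (k + 1) n, ∏ m, (Nat.centralBinom (f m) : ℝ)) := by
  intro k
  induction k with
  | zero =>
    have heq : (fun n => ∑ f ∈ antidiagonalTuple 1 n, ∏ m, (Nat.centralBinom (f m) : ℝ))
        = fun n => (Nat.centralBinom n : ℝ) := by
      funext n
      rw [antidiagonalTuple_one, Finset.sum_singleton]
      simp
    rw [heq]
    exact HG_congr HG_centralBinom (by norm_num)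
  | succ k ih =>
    have hc := HG_conv HG_centralBinom ih
    have heq : (fun n => ∑ f ∈ antidiagonalTuple (k + 1 + 1) n,
          ∏ m, (Nat.centralBinom (f m) : ℝ))
        = fun n => ∑ p ∈ antidiagonal n, (Nat.centralBinom p.1 : ℝ) *
            ∑ g ∈ antidiagonalTuple (k + 1) p.2, ∏ m, (Nat.centralBinom (g m) : ℝ) := by
      funext n
      exact S_succ (k + 1) n
    rw [heq]
    exact HG_congr hc (by push_cast; ring)

lemma HG_target (ℓ : ℕ) : HG ((2 * (ℓ : ℝ) + 1) / 2)
    (fun n => (Nat.choose (2 * n + 2 * ℓ) (n + ℓ) : ℝ) * (Nat.choose (n + ℓ) n : ℝ)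
      / (Nat.choose (2 * ℓ) ℓ : ℝ)) := by
  intro n
  simp only
  have hcb : ∀ m : ℕ, Nat.choose (2 * m) m = Nat.centralBinom m := fun m => rfl
  have e1 : 2 * (n + 1) + 2 * ℓ = 2 * ((n + ℓ) + 1) := by ring
  have e2 : 2 * n + 2 * ℓ = 2 * (n + ℓ) := by ring
  have e3 : n + 1 + ℓ = (n + ℓ) + 1 := by ring
  rw [e1, e3, e2, hcb ((n + ℓ) + 1), hcb (n + ℓ)]
  set m := n + ℓ with hm
  have A : ((m : ℝ) + 1) * (Nat.centralBinom (m + 1) : ℝ)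
      = 2 * (2 * (m : ℝ) + 1) * (Nat.centralBinom m : ℝ) := by
    exact_mod_cast Nat.succ_mul_centralBinom_succ m
  have B : ((m : ℝ) + 1) * (Nat.choose m n : ℝ)
      = (Nat.choose (m + 1) (n + 1) : ℝ) * ((n : ℝ) + 1) := by
    exact_mod_cast Nat.add_one_mul_choose_eq m n
  have hm1 : ((m : ℝ) + 1) ≠ 0 := by positivity
  have hden : (Nat.choose (2 * ℓ) ℓ : ℝ) ≠ 0 := by
    exact_mod_cast (Nat.choose_pos (by omega : ℓ ≤ 2 * ℓ)).ne'
  have hmr : (m : ℝ) = (n : ℝ) + (ℓ : ℝ) := by exact_mod_cast congrArg (Nat.cast : ℕ → ℝ) hm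
  have key : ((n : ℝ) + 1) * ((Nat.centralBinom (m + 1) : ℝ) * (Nat.choose (m + 1) (n + 1) : ℝ))
      = (4 * (n : ℝ) + 4 * (ℓ : ℝ) + 2) * ((Nat.centralBinom m : ℝ) * (Nat.choose m n : ℝ)) := by
    refine mul_left_cancel₀ hm1 (mul_left_cancel₀ hm1 ?_)
    linear_combination (((n : ℝ) + 1) * (Nat.choose (m + 1) (n + 1) : ℝ) * ((m : ℝ) + 1)) * A
      - (2 * (2 * (m : ℝ) + 1) * (Nat.centralBinom m : ℝ) * ((m : ℝ) + 1)) * B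
      + (4 * (Nat.centralBinom m : ℝ) * (Nat.choose m n : ℝ) * ((m : ℝ) + 1) ^ 2) * hmr
  field_simp
  linear_combination 2 * key

theorem S_odd_formula (n ℓ : ℕ) (hℓ : 0 < ℓ) :
    ((∑ f ∈ Finset.Nat.antidiagonalTuple (2 * ℓ + 1) n,
        ∏ m : Fin (2 * ℓ + 1), Nat.centralBinom (f m) : ℕ) : ℝ)
      = (Nat.choose (2 * n + 2 * ℓ) (n + ℓ) : ℝ) * (Nat.choose (n + ℓ) n : ℝ)
          / (Nat.choose (2 * ℓ) ℓ : ℝ) := by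
  have hS : HG ((2 * (ℓ : ℝ) + 1) / 2)
      (fun n => ∑ f ∈ antidiagonalTuple (2 * ℓ + 1) n, ∏ m, (Nat.centralBinom (f m) : ℝ)) :=
    HG_congr (HG_S (2 * ℓ)) (by push_cast; ring)
  have hO := HG_target ℓ
  have hden : (Nat.choose (2 * ℓ) ℓ : ℝ) ≠ 0 := by
    exact_mod_cast (Nat.choose_pos (by omega : ℓ ≤ 2 * ℓ)).ne'
  have h0 : (∑ f ∈ antidiagonalTuple (2 * ℓ + 1) 0, ∏ m, (Nat.centralBinom (f m) : ℝ))
      = (Nat.choose (2 * 0 + 2 * ℓ) (0 + ℓ) : ℝ) * (Nat.choose (0 + ℓ) 0 : ℝ)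
        / (Nat.choose (2 * ℓ) ℓ : ℝ) := by
    rw [S_zero_right]
    simp [div_self hden]
  have := HG_unique hS hO h0 n
  push_cast
  exact this
end

section
/- For all nonnegative integers p and integers ℓ with ℓ ≥ 2p, the alternating sum over i+m=p of (-1)^i * binomial(ℓ-i,i) * binomial(ℓ-2i,m) equals 1. -/
lemma aux_swap (p i a : ℕ) (hi : i ≤ p) :
    p.choose i * (p - i).choose a = p.choose a * (p - a).choose i := by
  rcases le_or_gt (i + a) p with hle | hlt
  · have h1 := Nat.choose_mul (n := p) (k := i + a) (s := i) (Nat.le_add_right _ _)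
    have h2 := Nat.choose_mul (n := p) (k := i + a) (s := a) (Nat.le_add_left _ _)
    have h3 : (i + a).choose i = (i + a).choose a := by
      rw [← Nat.choose_symm (Nat.le_add_right i a), Nat.add_sub_cancel_left]
    rw [Nat.add_sub_cancel_left] at h1
    rw [Nat.add_sub_cancel] at h2
    rw [← h1, h3, h2]
  · rcases le_or_gt a p with hap | hap
    · have hz1 : (p - i).choose a = 0 := Nat.choose_eq_zero_of_lt (by omega)
      have hz2 : (p - a).choose i = 0 := Nat.choose_eq_zero_of_lt (by omega)
      rw [hz1, hz2, Nat.mul_zero, Nat.mul_zero]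
    · have hz1 : (p - i).choose a = 0 := Nat.choose_eq_zero_of_lt (by omega)
      have hz2 : p.choose a = 0 := Nat.choose_eq_zero_of_lt (by omega)
      rw [hz1, hz2, Nat.mul_zero, Nat.zero_mul]

lemma altInnerSum (p a : ℕ) (ha : a ≤ p) :
    ∑ i ∈ Finset.range (p + 1),
      (-1 : ℤ) ^ i * (p.choose i : ℤ) * ((p - i).choose a : ℤ)
      = if a = p then 1 else 0 := by
  have hrw : ∀ i ∈ Finset.range (p + 1),
      (-1 : ℤ) ^ i * (p.choose i : ℤ) * ((p - i).choose a : ℤ)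
      = (p.choose a : ℤ) * ((-1) ^ i * ((p - a).choose i : ℤ)) := by
    intro i hi
    rw [Finset.mem_range] at hi
    have := aux_swap p i a (by omega)
    have hcast : (p.choose i : ℤ) * ((p - i).choose a : ℤ)
        = (p.choose a : ℤ) * ((p - a).choose i : ℤ) := by exact_mod_cast congrArg (Nat.cast : ℕ → ℤ) this
    push_cast at hcast ⊢
    linarith [mul_comm ((-1 : ℤ) ^ i) ((p.choose i : ℤ) * ((p - i).choose a : ℤ)),
      congrArg (fun x => (-1 : ℤ) ^ i * x) hcast]
  rw [Finset.sum_congr rfl hrw, ← Finset.mul_sum]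
  have hshrink : ∑ i ∈ Finset.range (p + 1), (-1 : ℤ) ^ i * ((p - a).choose i : ℤ)
      = ∑ i ∈ Finset.range (p - a + 1), (-1 : ℤ) ^ i * ((p - a).choose i : ℤ) := by
    apply (Finset.sum_subset (by apply Finset.range_subset_range.2; omega) _).symm
    intro x _ hx
    rw [Finset.mem_range, not_lt] at hx
    have : (p - a).choose x = 0 := Nat.choose_eq_zero_of_lt (by omega)
    simp [this]
  rw [hshrink, Int.alternating_sum_range_choose]
  by_cases hap : a = p
  · subst hap; simp
  · have : p - a ≠ 0 := by omega
    simp [this, hap]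

theorem alt_sum_binom_eq_one (p ℓ : ℕ) (h : 2 * p ≤ ℓ) :
    ∑ i ∈ Finset.range (p + 1),
      (-1 : ℤ) ^ i * (Nat.choose (ℓ - i) i : ℤ) * (Nat.choose (ℓ - 2 * i) (p - i) : ℤ)
      = 1 := by
  have step1 : ∀ i ∈ Finset.range (p + 1),
      (-1 : ℤ) ^ i * (Nat.choose (ℓ - i) i : ℤ) * (Nat.choose (ℓ - 2 * i) (p - i) : ℤ)
      = (-1 : ℤ) ^ i * (p.choose i : ℤ) * ((ℓ - i).choose p : ℤ) := by
    intro i hi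
    rw [Finset.mem_range] at hi
    have hip : i ≤ p := by omega
    have hpl : p ≤ ℓ - i := by omega
    have key := Nat.choose_mul (n := ℓ - i) (k := p) (s := i) hip
    have hsub : ℓ - i - i = ℓ - 2 * i := by omega
    rw [hsub] at key
    -- key : (ℓ - i).choose p * p.choose i = (ℓ - i).choose i * (ℓ - 2*i).choose (p - i)
    have hcast : ((ℓ - i).choose p : ℤ) * (p.choose i : ℤ)
        = ((ℓ - i).choose i : ℤ) * ((ℓ - 2 * i).choose (p - i) : ℤ) := by exact_mod_cast key
    rw [mul_assoc, mul_assoc, ← hcast]; ring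
  rw [Finset.sum_congr rfl step1]
  have step2 : ∀ i ∈ Finset.range (p + 1),
      (-1 : ℤ) ^ i * (p.choose i : ℤ) * ((ℓ - i).choose p : ℤ)
      = ∑ ab ∈ Finset.HasAntidiagonal.antidiagonal p,
          (-1 : ℤ) ^ i * (p.choose i : ℤ) * ((p - i).choose ab.1 : ℤ) * ((ℓ - p).choose ab.2 : ℤ) := by
    intro i hi
    rw [Finset.mem_range] at hi
    have hdecomp : ℓ - i = (p - i) + (ℓ - p) := by omega
    rw [hdecomp, Nat.add_choose_eq]
    push_cast [Finset.mul_sum]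
    apply Finset.sum_congr rfl
    intro ab _
    ring
  rw [Finset.sum_congr rfl step2, Finset.sum_comm]
  have step3 : ∀ ab ∈ Finset.HasAntidiagonal.antidiagonal p,
      (∑ i ∈ Finset.range (p + 1),
        (-1 : ℤ) ^ i * (p.choose i : ℤ) * ((p - i).choose ab.1 : ℤ) * ((ℓ - p).choose ab.2 : ℤ))
      = (if ab.1 = p then 1 else 0) * ((ℓ - p).choose ab.2 : ℤ) := by
    intro ab hab
    rw [Finset.HasAntidiagonal.mem_antidiagonal] at hab
    rw [← Finset.sum_mul, altInnerSum p ab.1 (by omega)]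
  rw [Finset.sum_congr rfl step3]
  rw [Finset.sum_eq_single_of_mem ((p, 0) : ℕ × ℕ)]
  · simp
  · simp [Finset.HasAntidiagonal.mem_antidiagonal]
  · rintro ⟨b1, b2⟩ hb hne
    rw [Finset.HasAntidiagonal.mem_antidiagonal] at hb
    have : b1 ≠ p := by
      intro h'
      exact hne (by simp_all)
    simp [this]
end

section
/- For every nonnegative integer n and real number ℓ, the sum over i from 0 to n of binomial(2n-i, n-i) * binomial(ℓ+i-1, i) equals binomial(2n+ℓ, n). -/
lemma factorial_mul_rchoose (x : ℝ) (k : ℕ) :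
    (Nat.factorial k : ℝ) * rchoose x k = ∏ j ∈ Finset.range k, (x - j) := by
  rw [rchoose]
  field_simp

lemma descPochhammer_smeval_real (x : ℝ) (k : ℕ) :
    (descPochhammer ℤ k).smeval x = ∏ j ∈ Finset.range k, (x - j) := by
  induction k with
  | zero => simp [descPochhammer_zero, Polynomial.smeval_one]
  | succ k ih =>
    rw [descPochhammer_succ_right, Polynomial.smeval_mul, ih, Finset.prod_range_succ]
    congr 1
    simp [Polynomial.smeval_sub, Polynomial.smeval_X, Polynomial.smeval_natCast]

lemma ring_choose_eq_rchoose (x : ℝ) (k : ℕ) : Ring.choose x k = rchoose x k := by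
  have hk : (Nat.factorial k : ℝ) ≠ 0 := by exact_mod_cast Nat.factorial_ne_zero k
  apply mul_left_cancel₀ hk
  rw [factorial_mul_rchoose, ← descPochhammer_smeval_real,
    Ring.descPochhammer_eq_factorial_smul_choose, nsmul_eq_mul]

lemma prod_neg_range (f : ℕ → ℝ) (k : ℕ) :
    ∏ j ∈ Finset.range k, (-(f j)) = (-1) ^ k * ∏ j ∈ Finset.range k, f j := by
  induction k with
  | zero => simp
  | succ k ih =>
    rw [Finset.prod_range_succ, Finset.prod_range_succ, ih, pow_succ]
    ring

lemma rchoose_reflect (x : ℝ) (k : ℕ) :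
    rchoose x k = (-1) ^ k * rchoose ((k : ℝ) - 1 - x) k := by
  have hk : (Nat.factorial k : ℝ) ≠ 0 := by exact_mod_cast Nat.factorial_ne_zero k
  apply mul_left_cancel₀ hk
  rw [mul_left_comm, factorial_mul_rchoose, factorial_mul_rchoose]
  have key : ∀ j ∈ Finset.range k,
      x - (j : ℝ) = -((((k : ℝ) - 1 - x) - ((k - 1 - j : ℕ) : ℝ))) := by
    intro j hj
    have hj' : j < k := Finset.mem_range.mp hj
    have : ((k - 1 - j : ℕ) : ℝ) = (k : ℝ) - 1 - (j : ℝ) := by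
      rw [Nat.sub_sub]
      rw [Nat.cast_sub (by omega)]
      push_cast
      ring
    rw [this]; ring
  rw [Finset.prod_congr rfl key]
  rw [prod_neg_range (fun j => (((k : ℝ) - 1 - x) - ((k - 1 - j : ℕ) : ℝ))) k,
    Finset.prod_range_reflect (fun j => ((k : ℝ) - 1 - x) - (j : ℝ)) k]

lemma rchoose_add_s18 (x y : ℝ) (n : ℕ) :
    rchoose (x + y) n = ∑ ij ∈ Finset.HasAntidiagonal.antidiagonal n, rchoose x ij.1 * rchoose y ij.2 := by
  have h := Ring.add_choose_eq (r := x) (s := y) n (Commute.all x y)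
  simpa [ring_choose_eq_rchoose] using h

theorem sum_binom_rchoose (n : ℕ) (ℓ : ℝ) :
    ∑ i ∈ Finset.range (n + 1),
        (Nat.choose (2 * n - i) (n - i) : ℝ) * rchoose (ℓ + (i : ℝ) - 1) i
      = rchoose (2 * (n : ℝ) + ℓ) n := by
  have hterm : ∀ i ∈ Finset.range (n + 1),
      (Nat.choose (2 * n - i) (n - i) : ℝ) * rchoose (ℓ + (i : ℝ) - 1) i
        = (-1) ^ n * (rchoose (-ℓ) i * rchoose (-(n : ℝ) - 1) (n - i)) := by
    intro i hi
    have hin : i ≤ n := Nat.lt_succ_iff.mp (Finset.mem_range.mp hi)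
    have h1 : (Nat.choose (2 * n - i) (n - i) : ℝ)
        = (-1) ^ (n - i) * rchoose (-(n : ℝ) - 1) (n - i) := by
      rw [← Ring.choose_natCast (R := ℝ) (2 * n - i) (n - i), ring_choose_eq_rchoose,
        rchoose_reflect]
      congr 2
      rw [Nat.cast_sub hin, Nat.cast_sub (by omega : i ≤ 2 * n)]
      push_cast
      ring
    have h2 : rchoose (ℓ + (i : ℝ) - 1) i = (-1) ^ i * rchoose (-ℓ) i := by
      rw [rchoose_reflect (ℓ + (i : ℝ) - 1) i]
      congr 2
      ring
    rw [h1, h2, ← Nat.sub_add_cancel hin, pow_add]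
    ring_nf
    rw [Nat.sub_add_cancel hin]
    ring
  rw [Finset.sum_congr rfl hterm, ← Finset.mul_sum]
  have hrhs : rchoose (2 * (n : ℝ) + ℓ) n
      = (-1) ^ n * rchoose ((-ℓ) + (-(n : ℝ) - 1)) n := by
    rw [rchoose_reflect (2 * (n : ℝ) + ℓ) n]
    congr 2
    ring
  rw [hrhs, rchoose_add_s18, Finset.Nat.sum_antidiagonal_eq_sum_range_succ_mk]
end

section
/- Let F(n,i) = binomial(2n-i, n-i)*binomial(ℓ+i-1, i) and G(n,i) = i(i+1)*binomial(2n+1-i, n+1-i)*binomial(ℓ+i, i+1) for a fixed real ℓ. Then for all nonnegative integers n and 0 ≤ i ≤ n+1: (2n+ℓ+1)(2n+ℓ+2)*F(n,i) − (n+ℓ+1)(n+1)*F(n+1,i) = G(n,i+1) − G(n,i). -/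
lemma rchoose_succ_left (x : ℝ) (k : ℕ) :
    rchoose x (k+1) = x/(k+1) * rchoose (x-1) k := by
  unfold rchoose
  rw [Finset.prod_range_succ']
  rw [Finset.prod_congr rfl (fun j _ => show x - ((j:ℕ)+1 : ℕ) = x - 1 - j by push_cast; ring)]
  rw [Nat.factorial_succ]
  push_cast
  field_simp
  ring

lemma rchoose_succ_right (x : ℝ) (k : ℕ) :
    rchoose x (k+1) = (x - k)/(k+1) * rchoose x k := by
  unfold rchoose
  rw [Finset.prod_range_succ, Nat.factorial_succ]
  push_cast
  field_simp

theorem wz_certificate (ℓ : ℝ) (n i : ℕ) (hi : i ≤ n + 1) :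
    letI F : ℕ → ℕ → ℝ := fun n i =>
      rchoose (2 * (n : ℝ) - i) n * rchoose (ℓ + i - 1) i
    letI G : ℕ → ℕ → ℝ := fun n i =>
      (i : ℝ) * (i + 1) * rchoose (2 * (n : ℝ) + 1 - i) n * rchoose (ℓ + i) (i + 1)
    (2 * n + ℓ + 1) * (2 * n + ℓ + 2) * F n i - (n + ℓ + 1) * (n + 1) * F (n + 1) i
      = G n (i + 1) - G n i := by
  dsimp only
  rcases n with _ | m
  · interval_cases i <;>
      · simp only [rchoose, Finset.prod_range_succ, Finset.prod_range_zero, Nat.factorial]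
        push_cast
        ring
  · push_cast
    rw [show (2*((m:ℝ)+1)+1-((i:ℝ)+1)) = 2*((m:ℝ)+1) - (i:ℝ) by ring]
    rw [rchoose_succ_right (2*((m:ℝ)+1) - (i:ℝ)) m]
    rw [rchoose_succ_left (2*((m:ℝ)+1+1) - (i:ℝ)) (m+1)]
    rw [rchoose_succ_left (2*((m:ℝ)+1+1) - (i:ℝ) - 1) m]
    rw [show (2*((m:ℝ)+1+1) - (i:ℝ) - 1 - 1) = 2*((m:ℝ)+1) - (i:ℝ) by ring]
    rw [rchoose_succ_left (2*((m:ℝ)+1)+1 - (i:ℝ)) m]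
    rw [show (2*((m:ℝ)+1)+1 - (i:ℝ) - 1) = 2*((m:ℝ)+1) - (i:ℝ) by ring]
    rw [rchoose_succ_left (ℓ + ((i:ℝ)+1)) (i+1)]
    rw [rchoose_succ_left (ℓ + ((i:ℝ)+1) - 1) i]
    rw [show (ℓ + ((i:ℝ)+1) - 1 - 1) = ℓ + (i:ℝ) - 1 by ring]
    rw [rchoose_succ_left (ℓ + (i:ℝ)) i]
    push_cast
    have hm : ((m:ℝ)+1) ≠ 0 := by positivity
    have hm2 : ((m:ℝ)+1+1) ≠ 0 := by positivity
    have hi1 : ((i:ℝ)+1) ≠ 0 := by positivity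
    have hi2 : ((i:ℝ)+1+1) ≠ 0 := by positivity
    field_simp
    ring
end
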